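/- All bases of a Lagrangian orthogonal matroid have the same parity: if B is a collection of admissible n-subsets of [n] ∪ [n]* satisfying the Strong Exchange Property, then any two members of B have the same number of starred elements modulo 2. -/
import Mathlib


/-- `J n` models `[n] ∪ [n]*` : the element `(i, false)` is `i` and `(i, true)` is `i*`. -/
abbrev J (n : ℕ) := Fin n × Bool

/-- The star involution `i ↦ i*`, `i* ↦ i`. -/
def jstar {n : ℕ} (x : J n) : J n := (x.1, !x.2)

/-- `K* = { k* : k ∈ K }`. -/
def starSet {n : ℕ} (K : Finset (J n)) : Finset (J n) := K.image jstar

/-- A subset `K ⊆ [n] ∪ [n]*` is admissible if `K ∩ K* = ∅`. -/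
def Admissible {n : ℕ} (K : Finset (J n)) : Prop := K ∩ starSet K = ∅

/-- The Strong Exchange Property for a collection of subsets of `[n] ∪ [n]*`. -/
def StrongExchange {n : ℕ} (𝔅 : Set (Finset (J n))) : Prop :=
  ∀ A ∈ 𝔅, ∀ C ∈ 𝔅, ∀ a ∈ symmDiff A C, ∃ b ∈ C \ A, b ≠ jstar a ∧
    symmDiff A {a, b, jstar a, jstar b} ∈ 𝔅 ∧ symmDiff C {a, b, jstar a, jstar b} ∈ 𝔅

/-- The number of starred elements of a subset of `[n] ∪ [n]*`. -/
def starCount {n : ℕ} (A : Finset (J n)) : ℕ := (A.filter (fun x => x.2 = true)).card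

/-- `1` if the element is starred, `0` otherwise, in `ZMod 2`. -/
def f2 {n : ℕ} (x : J n) : ZMod 2 := if x.2 then 1 else 0

/-- The parity of the number of starred elements, as an element of `ZMod 2`. -/
def sc2 {n : ℕ} (B : Finset (J n)) : ZMod 2 := ∑ x ∈ B, f2 x

lemma sc2_eq {n : ℕ} (B : Finset (J n)) : (starCount B : ZMod 2) = sc2 B := by
  unfold starCount sc2 f2
  rw [Finset.card_filter]
  push_cast
  rfl

lemma sc2_symmDiff {n : ℕ} (X Y : Finset (J n)) :
    sc2 (symmDiff X Y) = sc2 X + sc2 Y := by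
  classical
  have hcup : symmDiff X Y ∪ (X ∩ Y) = X ∪ Y := by
    ext x; simp [Finset.mem_symmDiff]; tauto
  have hdisj : Disjoint (symmDiff X Y) (X ∩ Y) := by
    simp [Finset.disjoint_left, Finset.mem_symmDiff]; tauto
  have h1 : sc2 (symmDiff X Y) + sc2 (X ∩ Y) = sc2 (X ∪ Y) := by
    unfold sc2; rw [← Finset.sum_union hdisj, hcup]
  have h2 : sc2 (X ∪ Y) + sc2 (X ∩ Y) = sc2 X + sc2 Y :=
    Finset.sum_union_inter
  have hI : sc2 (X ∩ Y) + sc2 (X ∩ Y) = 0 := by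
    have : ∀ x : ZMod 2, x + x = 0 := by decide
    exact this _
  linear_combination h1 + h2 - hI

/-- An admissible set of size `n` contains exactly one of `x`, `x*` for every `x`. -/
lemma transversal_mem {n : ℕ} {B : Finset (J n)} (h1 : Admissible B) (h2 : B.card = n)
    (x : J n) : jstar x ∈ B ↔ x ∉ B := by
  classical
  have both : ∀ y : J n, y ∈ B → jstar y ∉ B := by
    intro y hy hjy
    have hmem : y ∈ B ∩ starSet B := by
      refine Finset.mem_inter.2 ⟨hy, ?_⟩
      simp only [starSet, Finset.mem_image]
      exact ⟨jstar y, hjy, by simp [jstar]⟩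
    rw [h1] at hmem
    exact absurd hmem (Finset.notMem_empty y)
  constructor
  · intro hjx hx
    exact both x hx hjx
  · intro hx
    have hinj : Set.InjOn Prod.fst (B : Set (J n)) := by
      intro u hu v hv huv
      by_contra hne
      have hb : v.2 = !u.2 := by
        cases h2u : u.2 <;> cases h2v : v.2 <;>
          simp_all [Prod.ext_iff]
      have : v = jstar u := by
        simp [jstar, Prod.ext_iff, huv.symm, hb]
      exact both u hu (this ▸ hv)
    have himg : B.image Prod.fst = Finset.univ := by
      apply Finset.eq_of_subset_of_card_le (Finset.subset_univ _)
      rw [Finset.card_image_of_injOn hinj, h2, Finset.card_univ, Fintype.card_fin]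
    have : x.1 ∈ B.image Prod.fst := by rw [himg]; exact Finset.mem_univ _
    obtain ⟨y, hy, hy1⟩ := Finset.mem_image.1 this
    have hyx : y ≠ x := fun h => hx (h ▸ hy)
    have : y = jstar x := by
      have hb : y.2 = !x.2 := by
        cases h2y : y.2 <;> cases h2x : x.2 <;> simp_all [Prod.ext_iff]
      simp [jstar, Prod.ext_iff, hy1, hb]
    exact this ▸ hy

lemma symmDiff_of_subset {n : ℕ} {S T : Finset (J n)} (h : S ⊆ T) :
    symmDiff T S = T \ S := by
  ext x
  simp only [Finset.mem_symmDiff, Finset.mem_sdiff]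
  have := @h x
  tauto

/-- all bases of a Lagrangian orthogonal matroid have the same parity. -/
theorem bases_same_parity (n : ℕ) (𝔅 : Set (Finset (J n)))
    (hadm : ∀ B ∈ 𝔅, Admissible B ∧ B.card = n)
    (hSE : StrongExchange 𝔅) :
    ∀ A ∈ 𝔅, ∀ C ∈ 𝔅, starCount A % 2 = starCount C % 2 := by
  classical
  suffices h : ∀ k : ℕ, ∀ A ∈ 𝔅, ∀ C ∈ 𝔅, (symmDiff A C).card ≤ k → sc2 A = sc2 C by
    intro A hA C hC
    have h2 := h (symmDiff A C).card A hA C hC le_rfl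
    rw [← sc2_eq, ← sc2_eq] at h2
    exact (ZMod.natCast_eq_natCast_iff' _ _ _).1 h2
  intro k
  induction k with
  | zero =>
    intro A hA C hC hcard
    have h0 : symmDiff A C = ∅ := Finset.card_eq_zero.1 (Nat.le_zero.1 hcard)
    have : A = C := by
      rwa [← Finset.bot_eq_empty, symmDiff_eq_bot] at h0
    rw [this]
  | succ k ih =>
    intro A hA C hC hcard
    by_cases hAC : A = C
    · rw [hAC]
    have hAadm := hadm A hA
    have hCadm := hadm C hC
    have hne : (A \ C).Nonempty := by
      rw [Finset.sdiff_nonempty]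
      intro hsub
      exact hAC (Finset.eq_of_subset_of_card_le hsub (by rw [hAadm.2, hCadm.2]))
    obtain ⟨a, ha⟩ := hne
    have haA : a ∈ A := (Finset.mem_sdiff.1 ha).1
    have haC : a ∉ C := (Finset.mem_sdiff.1 ha).2
    have haAC : a ∈ symmDiff A C := by
      rw [Finset.mem_symmDiff]; tauto
    obtain ⟨b, hb, hbne, hA', _⟩ := hSE A hA C hC a haAC
    have hbC : b ∈ C := (Finset.mem_sdiff.1 hb).1
    have hbA : b ∉ A := (Finset.mem_sdiff.1 hb).2
    have hab1 : a.1 ≠ b.1 := by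
      intro h
      have hba : b = a ∨ b = jstar a := by
        cases h2a : a.2 <;> cases h2b : b.2 <;>
          simp_all [jstar, Prod.ext_iff]
      rcases hba with h' | h'
      · exact haC (h' ▸ hbC)
      · exact hbne h'
    have hjaC : jstar a ∈ C := (transversal_mem hCadm.1 hCadm.2 a).2 haC
    have hjaA : jstar a ∉ A := fun h => (transversal_mem hAadm.1 hAadm.2 a).1 h haA
    have hjbA : jstar b ∈ A := (transversal_mem hAadm.1 hAadm.2 b).2 hbA
    have hjbC : jstar b ∉ C := fun h => (transversal_mem hCadm.1 hCadm.2 b).1 h hbC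
    set S : Finset (J n) := {a, b, jstar a, jstar b} with hS
    have hSsub : S ⊆ symmDiff A C := by
      intro x hx
      rw [Finset.mem_symmDiff]
      simp only [hS, Finset.mem_insert, Finset.mem_singleton] at hx
      rcases hx with rfl | rfl | rfl | rfl <;> tauto
    have hsc2S : sc2 S = 0 := by
      have hpair : ∀ x : J n, sc2 {x, jstar x} = 1 := by
        intro x
        have hxne : x ≠ jstar x := by
          intro h
          have := congrArg Prod.snd h
          simp [jstar] at this
        rw [sc2, Finset.sum_pair hxne]
        cases hx : x.2 <;> simp [f2, jstar, hx]
      have hSeq : S = {a, jstar a} ∪ {b, jstar b} := by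
        ext x
        simp only [hS, Finset.mem_insert, Finset.mem_singleton, Finset.mem_union]
        tauto
      have hdisj : Disjoint ({a, jstar a} : Finset (J n)) {b, jstar b} := by
        rw [Finset.disjoint_left]
        intro x hx hx'
        simp only [Finset.mem_insert, Finset.mem_singleton] at hx hx'
        apply hab1
        rcases hx with rfl | rfl <;> rcases hx' with h | h <;>
          simpa [jstar] using congrArg Prod.fst h
      rw [hSeq, sc2, Finset.sum_union hdisj, ← sc2, ← sc2, hpair, hpair]
      decide
    have hscA' : sc2 (symmDiff A S) = sc2 A := by
      rw [sc2_symmDiff, hsc2S, add_zero]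
    have hdist : symmDiff (symmDiff A S) C = (symmDiff A C) \ S := by
      rw [symmDiff_assoc, symmDiff_comm S C, ← symmDiff_assoc, symmDiff_of_subset hSsub]
    have haS : a ∈ S := by simp [hS]
    have hcard' : (symmDiff (symmDiff A S) C).card ≤ k := by
      rw [hdist, Finset.card_sdiff_of_subset hSsub]
      have h1 : 1 ≤ S.card := Finset.card_pos.2 ⟨a, haS⟩
      omega
    have hihres := ih (symmDiff A S) hA' C hC hcard'
    rw [← hihres, hscA']
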